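/- arXiv:2403.02162 — 2 statements merged into one kernel-verified Lean document; each statement's English description precedes it below -/
import Mathlib

section
/- For the inelastic collision law with emission, with ω a unit vector satisfying (vᵢ-vⱼ)·ω ≠ 0 and |vᵢ-vⱼ|² > 4ε₀, one has 1 + aᵢ·(vᵢ-v'ᵢ) + aⱼ·(vⱼ-v'ⱼ) = -√(1 - 4ε₀/|vᵢ-vⱼ|²), where aᵢ = -ω/((vᵢ-vⱼ)·ω), aⱼ = ω/((vᵢ-vⱼ)·ω), v'ᵢ = (vᵢ+vⱼ)/2 - σκ, v'ⱼ = (vᵢ+vⱼ)/2 + σκ, σ = u - 2(u·ω)ω with u = (vⱼ-vᵢ)/|vⱼ-vᵢ|, and κ = √(|vᵢ-vⱼ|²/4 - ε₀). -/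
open scoped RealInnerProductSpace

theorem inelastic_tc_gradient_dot (d : ℕ) (hd : 2 ≤ d) (ε₀ : ℝ) (hε : 0 < ε₀)
    (vi vj ω : EuclideanSpace ℝ (Fin d)) (hω : ‖ω‖ = 1)
    (hv : 4 * ε₀ < ‖vi - vj‖ ^ 2) (hne : ⟪vi - vj, ω⟫ ≠ 0)
    (u σ : EuclideanSpace ℝ (Fin d))
    (hu : u = (‖vj - vi‖)⁻¹ • (vj - vi))
    (hσ : σ = u - (2 * ⟪u, ω⟫) • ω)
    (κ : ℝ) (hκ : κ = Real.sqrt (‖vi - vj‖ ^ 2 / 4 - ε₀))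
    (vi' vj' ai aj : EuclideanSpace ℝ (Fin d))
    (hvi' : vi' = (1 / 2 : ℝ) • (vi + vj) - κ • σ)
    (hvj' : vj' = (1 / 2 : ℝ) • (vi + vj) + κ • σ)
    (hai : ai = -((⟪vi - vj, ω⟫)⁻¹ • ω))
    (haj : aj = (⟪vi - vj, ω⟫)⁻¹ • ω) :
    1 + ⟪ai, vi - vi'⟫ + ⟪aj, vj - vj'⟫
      = -Real.sqrt (1 - 4 * ε₀ / ‖vi - vj‖ ^ 2) := by
  set n := ‖vi - vj‖ with hn_def
  have hn2 : 0 < n ^ 2 := lt_trans (by positivity) hv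
  have hn : 0 < n := by nlinarith [norm_nonneg (vi - vj)]
  have hrev : ‖vj - vi‖ = n := norm_sub_rev vj vi
  set c := ⟪vi - vj, ω⟫ with hc_def
  have hωω : ⟪ω, ω⟫ = (1 : ℝ) := by
    rw [real_inner_self_eq_norm_sq, hω]; norm_num
  have hωu : ⟪ω, u⟫ = n⁻¹ * (-c) := by
    rw [hu, real_inner_smul_right, hrev]
    rw [show ⟪ω, vj - vi⟫ = -⟪vi - vj, ω⟫ by
      rw [real_inner_comm]; rw [show vj - vi = -(vi - vj) by abel, inner_neg_left]]
  have huω : ⟪u, ω⟫ = n⁻¹ * (-c) := by rw [real_inner_comm]; exact hωu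
  have hωσ : ⟪ω, σ⟫ = n⁻¹ * c := by
    rw [hσ, inner_sub_right, real_inner_smul_right, hωω, hωu, huω]; ring
  -- key sqrt facts
  have hs_nonneg : (0:ℝ) ≤ n ^ 2 - 4 * ε₀ := by linarith
  set s := Real.sqrt (n ^ 2 - 4 * ε₀) with hs_def
  have h4 : Real.sqrt 4 = 2 := by
    rw [show (4:ℝ) = 2 ^ 2 by norm_num, Real.sqrt_sq (by norm_num : (0:ℝ) ≤ 2)]
  have hκs : κ = s / 2 := by
    rw [hκ, show n ^ 2 / 4 - ε₀ = (n ^ 2 - 4 * ε₀) / 4 by ring,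
      Real.sqrt_div hs_nonneg, h4]
  have hrhs : Real.sqrt (1 - 4 * ε₀ / n ^ 2) = s / n := by
    rw [show 1 - 4 * ε₀ / n ^ 2 = (n ^ 2 - 4 * ε₀) / n ^ 2 by field_simp,
      Real.sqrt_div hs_nonneg, Real.sqrt_sq hn.le]
  -- expand the inner products
  have h1 : ⟪ai, vi - vi'⟫ = -c⁻¹ * (⟪ω, vi⟫ - (1/2) * (⟪ω, vi⟫ + ⟪ω, vj⟫) + κ * (n⁻¹ * c)) := by
    simp only [hai, hvi', inner_neg_left, real_inner_smul_left, inner_sub_right,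
      inner_add_right, real_inner_smul_right, hωσ]
    ring
  have h2 : ⟪aj, vj - vj'⟫ = c⁻¹ * (⟪ω, vj⟫ - (1/2) * (⟪ω, vi⟫ + ⟪ω, vj⟫) - κ * (n⁻¹ * c)) := by
    simp only [haj, hvj', real_inner_smul_left, inner_sub_right,
      inner_add_right, real_inner_smul_right, hωσ]
    ring
  have hc : c = ⟪ω, vi⟫ - ⟪ω, vj⟫ := by
    rw [hc_def, real_inner_comm, inner_sub_right]
  rw [h1, h2, hrhs, hκs, hc]
  have hc' : ⟪ω, vi⟫ - ⟪ω, vj⟫ ≠ 0 := by rw [← hc]; exact hne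
  set a := (⟪ω, vi⟫ : ℝ)
  set b := (⟪ω, vj⟫ : ℝ)
  field_simp
  ring
end

section
/- In dimension d = 2, the Jacobian determinant of the inelastic scattering map (v, v*) ↦ (v', v*') given by v' = (v+v*)/2 - σκ, v*' = (v+v*)/2 + σκ, where κ = √(|v*-v|²/4 - ε₀) and σ = u - 2(u·ω)ω with u = (v*-v)/|v*-v| and ω a fixed unit vector, has absolute value 1 at every point where |v*-v|² > 4ε₀ and (v*-v)·ω ≠ 0. -/
open scoped RealInnerProductSpace

noncomputable section

local notation "E2" => EuclideanSpace ℝ (Fin 2)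

lemma det_two_dim (a : ℝ) (f : E2 →ₗ[ℝ] ℝ) (x : E2) :
    LinearMap.det (a • LinearMap.id + f.smulRight x) = a ^ 2 + a * f x := by
  rw [← LinearMap.det_toMatrix (PiLp.basisFun 2 ℝ (Fin 2)), Matrix.det_fin_two]
  have hx : f x = x 0 * f ((PiLp.basisFun 2 ℝ (Fin 2)) 0) + x 1 * f ((PiLp.basisFun 2 ℝ (Fin 2)) 1) := by
    nth_rewrite 1 [show x = x 0 • (PiLp.basisFun 2 ℝ (Fin 2)) 0 + x 1 • (PiLp.basisFun 2 ℝ (Fin 2)) 1 by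
      ext i; fin_cases i <;> simp [PiLp.basisFun_apply]]
    simp [map_add, map_smul]
  rw [hx]
  simp only [LinearMap.toMatrix_apply, PiLp.basisFun_apply, PiLp.basisFun_repr,
    LinearMap.add_apply, LinearMap.smul_apply, LinearMap.id_apply, LinearMap.smulRight_apply,
    PiLp.add_apply, PiLp.smul_apply, smul_eq_mul]
  simp [EuclideanSpace.single_apply]
  ring

lemma det_prodMap2 (f g : E2 →ₗ[ℝ] E2) :
    LinearMap.det (f.prodMap g) = LinearMap.det f * LinearMap.det g := by
  classical
  rw [← LinearMap.det_toMatrix ((PiLp.basisFun 2 ℝ (Fin 2)).prod (PiLp.basisFun 2 ℝ (Fin 2))),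
    LinearMap.toMatrix_prodMap, Matrix.det_fromBlocks_zero₂₁, LinearMap.det_toMatrix,
    LinearMap.det_toMatrix]

theorem inelastic_scattering_jacobian_dim2 (ε₀ : ℝ) (hε : 0 < ε₀)
    (ω : EuclideanSpace ℝ (Fin 2)) (hω : ‖ω‖ = 1)
    (S : EuclideanSpace ℝ (Fin 2) × EuclideanSpace ℝ (Fin 2) →
        EuclideanSpace ℝ (Fin 2) × EuclideanSpace ℝ (Fin 2))
    (hS : ∀ p : EuclideanSpace ℝ (Fin 2) × EuclideanSpace ℝ (Fin 2),
      S p = ((1 / 2 : ℝ) • (p.1 + p.2) - Real.sqrt (‖p.2 - p.1‖ ^ 2 / 4 - ε₀) •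
                ((‖p.2 - p.1‖)⁻¹ • (p.2 - p.1)
                  - (2 * ⟪(‖p.2 - p.1‖)⁻¹ • (p.2 - p.1), ω⟫) • ω),
            (1 / 2 : ℝ) • (p.1 + p.2) + Real.sqrt (‖p.2 - p.1‖ ^ 2 / 4 - ε₀) •
                ((‖p.2 - p.1‖)⁻¹ • (p.2 - p.1)
                  - (2 * ⟪(‖p.2 - p.1‖)⁻¹ • (p.2 - p.1), ω⟫) • ω)))
    (v vs : EuclideanSpace ℝ (Fin 2))
    (h1 : 4 * ε₀ < ‖vs - v‖ ^ 2) (h2 : ⟪vs - v, ω⟫ ≠ 0) :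
    |LinearMap.det (fderiv ℝ S (v, vs)).toLinearMap| = 1 := by
  classical
  set w : E2 := vs - v with hwdef
  have hr2 : 0 < ‖w‖ ^ 2 := by nlinarith
  have hr : 0 < ‖w‖ := by nlinarith [norm_nonneg w]
  have hs0 : 0 < ‖w‖ ^ 2 / 4 - ε₀ := by linarith
  have hsq : 0 < Real.sqrt (‖w‖ ^ 2 / 4 - ε₀) := Real.sqrt_pos.2 hs0
  -- reflection
  set Rm : E2 →L[ℝ] E2 :=
    ContinuousLinearMap.id ℝ E2 - (2 : ℝ) • ((innerSL ℝ ω).smulRight ω) with hRmdef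
  have hRm : ∀ x : E2, Rm x = x - (2 * ⟪x, ω⟫) • ω := by
    intro x
    simp [hRmdef, smul_smul, real_inner_comm]
  -- scalar function and F
  set gf : E2 → ℝ := fun x => Real.sqrt (‖x‖ ^ 2 / 4 - ε₀) * ‖x‖⁻¹ with hgfdef
  set Ff : E2 → E2 := fun x => gf x • Rm x with hFfdef
  have hSF : S = fun p : E2 × E2 =>
      ((1 / 2 : ℝ) • (p.1 + p.2) - Ff (p.2 - p.1),
       (1 / 2 : ℝ) • (p.1 + p.2) + Ff (p.2 - p.1)) := by
    funext p
    rw [hS p]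
    have hFx : ∀ x : E2, Real.sqrt (‖x‖ ^ 2 / 4 - ε₀) •
        ((‖x‖)⁻¹ • x - (2 * ⟪(‖x‖)⁻¹ • x, ω⟫) • ω) = Ff x := by
      intro x
      rw [hFfdef]
      simp only [hgfdef, hRm, real_inner_smul_left, smul_sub, smul_smul]
      match_scalars <;> ring
    rw [hFx]
  -- derivative of squared norm
  set Dq : E2 →L[ℝ] ℝ := (fderivInnerCLM ℝ (w, w)).comp
      ((ContinuousLinearMap.id ℝ E2).prod (ContinuousLinearMap.id ℝ E2)) with hDqdef
  have hq : HasFDerivAt (fun x : E2 => ‖x‖ ^ 2) Dq w := by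
    have h := (hasFDerivAt_id (𝕜 := ℝ) w).inner ℝ (hasFDerivAt_id w)
    simpa only [real_inner_self_eq_norm_sq, id_eq] using h
  have hDqw : Dq w = 2 * ‖w‖ ^ 2 := by
    have h0 : Dq w = ⟪w, w⟫ + ⟪w, w⟫ := fderivInnerCLM_apply ℝ (w, w) (w, w)
    rw [h0, real_inner_self_eq_norm_sq]
    ring
  -- one-variable derivative
  set s : ℝ := Real.sqrt (‖w‖ ^ 2 / 4 - ε₀) with hsdef
  set c : ℝ := (1 / (2 * s) * (1 / 4)) * (Real.sqrt (‖w‖ ^ 2))⁻¹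
      + s * (-(1 / (2 * Real.sqrt (‖w‖ ^ 2))) / (Real.sqrt (‖w‖ ^ 2)) ^ 2) with hcdef
  have hψ : HasDerivAt (fun t : ℝ => Real.sqrt (t / 4 - ε₀) * (Real.sqrt t)⁻¹) c (‖w‖ ^ 2) := by
    have hA : HasDerivAt (fun t : ℝ => Real.sqrt (t / 4 - ε₀)) (1 / (2 * s) * (1 / 4)) (‖w‖ ^ 2) := by
      have hinner : HasDerivAt (fun t : ℝ => t / 4 - ε₀) (1 / 4) (‖w‖ ^ 2) := by
        simpa using ((hasDerivAt_id (‖w‖ ^ 2)).div_const 4).sub_const ε₀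
      have := (Real.hasDerivAt_sqrt (ne_of_gt hs0)).comp (‖w‖ ^ 2) hinner
      simpa [Function.comp_def, hsdef] using this
    have hBs : Real.sqrt (‖w‖ ^ 2) ≠ 0 := by
      rw [Real.sqrt_sq hr.le]; exact hr.ne'
    have hB : HasDerivAt (fun t : ℝ => (Real.sqrt t)⁻¹)
        (-(1 / (2 * Real.sqrt (‖w‖ ^ 2))) / (Real.sqrt (‖w‖ ^ 2)) ^ 2) (‖w‖ ^ 2) :=
      (Real.hasDerivAt_sqrt (ne_of_gt hr2)).inv hBs
    have := hA.mul hB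
    rw [hcdef]
    exact this
  have hg : HasFDerivAt gf (c • Dq) w := by
    have h := hψ.comp_hasFDerivAt w hq
    have hfun : (fun t : ℝ => Real.sqrt (t / 4 - ε₀) * (Real.sqrt t)⁻¹) ∘ (fun x : E2 => ‖x‖ ^ 2)
        = gf := by
      funext x
      simp [Function.comp, hgfdef, Real.sqrt_sq (norm_nonneg x)]
    rwa [hfun] at h
  -- derivative of F
  set DF : E2 →L[ℝ] E2 := gf w • Rm + (c • Dq).smulRight (Rm w) with hDFdef
  have hF : HasFDerivAt Ff DF w := hg.smul Rm.hasFDerivAt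
  -- derivative of S
  set Lm : E2 × E2 →L[ℝ] E2 :=
    (1 / 2 : ℝ) • (ContinuousLinearMap.fst ℝ E2 E2 + ContinuousLinearMap.snd ℝ E2 E2) with hLmdef
  set A : E2 × E2 →L[ℝ] E2 :=
    ContinuousLinearMap.snd ℝ E2 E2 - ContinuousLinearMap.fst ℝ E2 E2 with hAdef
  have hAv : A (v, vs) = w := by simp [hAdef, hwdef]
  have hFA : HasFDerivAt (fun p : E2 × E2 => Ff (p.2 - p.1)) (DF.comp A) (v, vs) := by
    have := (hAv.symm ▸ hF).comp (v, vs) A.hasFDerivAt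
    exact this
  have hm : HasFDerivAt (fun p : E2 × E2 => (1 / 2 : ℝ) • (p.1 + p.2)) Lm (v, vs) := by
    exact Lm.hasFDerivAt
  set D : E2 × E2 →L[ℝ] E2 × E2 := (Lm - DF.comp A).prod (Lm + DF.comp A) with hDdef
  have hSder : fderiv ℝ S (v, vs) = D := by
    rw [hSF]
    exact (HasFDerivAt.prodMk (hm.sub hFA) (hm.add hFA)).fderiv
  rw [hSder]
  -- decomposition of D
  set Φ : E2 × E2 →ₗ[ℝ] E2 × E2 :=
    ((LinearMap.fst ℝ E2 E2) - (LinearMap.snd ℝ E2 E2)).prod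
      ((LinearMap.fst ℝ E2 E2) + (LinearMap.snd ℝ E2 E2)) with hΦdef
  set Ψ : E2 × E2 →ₗ[ℝ] E2 × E2 :=
    ((LinearMap.fst ℝ E2 E2) + (LinearMap.snd ℝ E2 E2)).prod
      ((LinearMap.snd ℝ E2 E2) - (LinearMap.fst ℝ E2 E2)) with hΨdef
  set M : E2 × E2 →ₗ[ℝ] E2 × E2 :=
    LinearMap.prodMap ((1 / 2 : ℝ) • LinearMap.id) DF.toLinearMap with hMdef
  have hdecomp : (D : (E2 × E2) →ₗ[ℝ] E2 × E2) = Φ ∘ₗ (M ∘ₗ Ψ) := by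
    apply LinearMap.ext
    intro p
    have hL : D p = ((1 / 2 : ℝ) • (p.1 + p.2) - DF (p.2 - p.1),
        (1 / 2 : ℝ) • (p.1 + p.2) + DF (p.2 - p.1)) := rfl
    have hR : (Φ ∘ₗ (M ∘ₗ Ψ)) p = ((1 / 2 : ℝ) • (p.1 + p.2) - DF (p.2 - p.1),
        (1 / 2 : ℝ) • (p.1 + p.2) + DF (p.2 - p.1)) := rfl
    exact hL.trans hR.symm
  have hΦΨ : LinearMap.det Φ * LinearMap.det Ψ = 16 := by
    rw [← LinearMap.det_comp]
    have : Φ ∘ₗ Ψ = (2 : ℝ) • (LinearMap.id : E2 × E2 →ₗ[ℝ] E2 × E2) := by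
      apply LinearMap.ext
      intro p
      have hL : (Φ ∘ₗ Ψ) p = ((p.1 + p.2) - (p.2 - p.1), (p.1 + p.2) + (p.2 - p.1)) := rfl
      rw [hL]
      have hR : ((2 : ℝ) • (LinearMap.id : E2 × E2 →ₗ[ℝ] E2 × E2)) p = ((2:ℝ) • p.1, (2:ℝ) • p.2) := rfl
      rw [hR, Prod.mk.injEq]
      constructor <;> module
    rw [this, LinearMap.det_smul]
    have : Module.finrank ℝ (E2 × E2) = 4 := by
      simp [Module.finrank_prod]
    rw [this]
    norm_num
  -- determinant of DF
  set Nl : E2 →ₗ[ℝ] E2 := gf w • LinearMap.id + ((c • Dq).toLinearMap).smulRight w with hNldef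
  have hDFdec : (DF : E2 →ₗ[ℝ] E2) = Rm.toLinearMap ∘ₗ Nl := by
    apply LinearMap.ext
    intro x
    simp [hDFdef, hNldef, map_add, map_smul]
  have hdetRm : LinearMap.det (Rm : E2 →ₗ[ℝ] E2) = -1 := by
    have : (Rm : E2 →ₗ[ℝ] E2) = (1 : ℝ) • LinearMap.id
        + ((innerSL ℝ ω).toLinearMap).smulRight ((-2 : ℝ) • ω) := by
      apply LinearMap.ext
      intro x
      simp only [LinearMap.add_apply, LinearMap.smul_apply, LinearMap.id_coe, id_eq,
        LinearMap.smulRight_apply, ContinuousLinearMap.coe_coe, innerSL_apply_apply,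
        ContinuousLinearMap.coe_sub', Pi.sub_apply, ContinuousLinearMap.coe_id', one_smul,
        hRm x, real_inner_comm ω x]
      match_scalars <;> ring
    rw [this, det_two_dim]
    have hval : (innerSL ℝ ω) ((-2 : ℝ) • ω) = -2 := by
      rw [innerSL_apply_apply, real_inner_smul_right, real_inner_self_eq_norm_sq, hω]
      norm_num
    simp only [ContinuousLinearMap.coe_coe, hval]
    norm_num
  have hdetNl : LinearMap.det Nl = 1 / 4 := by
    rw [hNldef, det_two_dim]
    have happ : ((c • Dq).toLinearMap) w = c * (2 * ‖w‖ ^ 2) := by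
      simp [hDqw]
    have hgfw : gf w = s * ‖w‖⁻¹ := rfl
    rw [happ, hgfw, hcdef, Real.sqrt_sq hr.le]
    have hsne : s ≠ 0 := ne_of_gt hsq
    have hrne : ‖w‖ ≠ 0 := hr.ne'
    field_simp
    ring
  have hdetDF : LinearMap.det (DF : E2 →ₗ[ℝ] E2) = -(1 / 4) := by
    rw [hDFdec, LinearMap.det_comp, hdetRm, hdetNl]
    norm_num
  have hdetM : LinearMap.det M = -(1 / 16) := by
    rw [hMdef, det_prodMap2, hdetDF, LinearMap.det_smul, LinearMap.det_id]
    have : Module.finrank ℝ E2 = 2 := by simp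
    rw [this]
    norm_num
  rw [hdecomp, LinearMap.det_comp, LinearMap.det_comp]
  have : LinearMap.det Φ * (LinearMap.det M * LinearMap.det Ψ)
      = LinearMap.det M * (LinearMap.det Φ * LinearMap.det Ψ) := by ring
  rw [this, hΦΨ, hdetM]
  norm_num
end
end
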